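/- For all s, t ∈ ℝ and θ ∈ (0,1], one has |h(s)·t| ≤ θ·H(s) + (1/θ)·H(t), where h and H are as in the truncated logarithmic nonlinearity. -/

import Mathlib

noncomputable def h (u : ℝ) : ℝ :=
  if |u| ≤ (Real.exp 1)⁻¹ then -u * Real.log (u ^ 2)
  else if u > (Real.exp 1)⁻¹ then 2 / Real.exp 1
  else -(2 / Real.exp 1)

noncomputable def H (u : ℝ) : ℝ :=
  if |u| ≤ (Real.exp 1)⁻¹ then
    -(1 / 2) * u ^ 2 * Real.log (u ^ 2) + (1 / 2) * u ^ 2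
  else (2 / Real.exp 1) * |u| - 1 / (2 * Real.exp 1 ^ 2)


lemma log_upper {r : ℝ} (hr : 1 ≤ r) : 2 * Real.log r ≤ r - r⁻¹ := by
  set f : ℝ → ℝ := fun x => x - x⁻¹ - 2 * Real.log x with hf
  have key : MonotoneOn f (Set.Ici 1) := by
    apply monotoneOn_of_deriv_nonneg (convex_Ici 1)
    · apply ContinuousOn.sub (ContinuousOn.sub continuousOn_id ?_) ?_
      · exact ContinuousOn.inv₀ continuousOn_id (fun x hx => by
          have : (1:ℝ) ≤ x := hx; positivity)
      · exact (Real.continuousOn_log.mono (fun x hx => by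
          have : (1:ℝ) ≤ x := hx; simp; positivity)).const_smul 2 |>.congr (by
            intro x hx; simp [smul_eq_mul])
    · intro x hx
      rw [interior_Ici] at hx
      have hx0 : x ≠ 0 := by have : (1:ℝ) < x := hx; positivity
      exact ((hasDerivAt_id x).sub (hasDerivAt_inv hx0) |>.sub
        ((Real.hasDerivAt_log hx0).const_mul 2)).differentiableAt.differentiableWithinAt
    · intro x hx
      rw [interior_Ici] at hx
      have hx1 : (1:ℝ) < x := hx
      have hx0 : x ≠ 0 := by positivity
      have hd : HasDerivAt f (1 - (-(x ^ 2)⁻¹) - 2 * x⁻¹) x :=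
        (hasDerivAt_id x).sub (hasDerivAt_inv hx0) |>.sub
          ((Real.hasDerivAt_log hx0).const_mul 2)
      rw [hd.deriv]
      have h1 : 1 - (-(x ^ 2)⁻¹) - 2 * x⁻¹ = (1 - x⁻¹)^2 := by
        field_simp; ring
      rw [h1]; positivity
  have := key (Set.self_mem_Ici) (a := 1) (b := r) hr hr
  simp [hf] at this
  linarith

lemma log_lower {r : ℝ} (hr : 1 ≤ r) : 2 * (r - 1) ≤ (r + 1) * Real.log r := by
  set f : ℝ → ℝ := fun x => (x + 1) * Real.log x - 2 * (x - 1) with hf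
  have key : MonotoneOn f (Set.Ici 1) := by
    apply monotoneOn_of_deriv_nonneg (convex_Ici 1)
    · apply ContinuousOn.sub
      · apply ContinuousOn.mul (by fun_prop)
        exact Real.continuousOn_log.mono (fun x hx => by
          have : (1:ℝ) ≤ x := hx; simp; positivity)
      · fun_prop
    · intro x hx
      rw [interior_Ici] at hx
      have hx0 : x ≠ 0 := by have : (1:ℝ) < x := hx; positivity
      exact (((hasDerivAt_id x).add_const 1).mul (Real.hasDerivAt_log hx0) |>.sub
        (((hasDerivAt_id x).sub_const 1).const_mul 2)).differentiableAt.differentiableWithinAt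
    · intro x hx
      rw [interior_Ici] at hx
      have hx1 : (1:ℝ) < x := hx
      have hx0 : (0:ℝ) < x := by positivity
      have hd : HasDerivAt f (1 * Real.log x + (x + 1) * x⁻¹ - 2 * 1) x :=
        ((hasDerivAt_id x).add_const 1).mul (Real.hasDerivAt_log hx0.ne') |>.sub
          (((hasDerivAt_id x).sub_const 1).const_mul 2)
      rw [hd.deriv]
      have hlog : 1 - x⁻¹ ≤ Real.log x := by
        have := Real.log_le_sub_one_of_pos (inv_pos.mpr hx0)
        rw [Real.log_inv] at this
        linarith
      have : (x + 1) * x⁻¹ = 1 + x⁻¹ := by field_simp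
      rw [this]; linarith
  have := key (Set.self_mem_Ici) (a := 1) (b := r) hr hr
  simp [hf] at this
  linarith



lemma log_upper' {x y : ℝ} (hx : 0 < x) (hxy : x ≤ y) :
    2 * x * y * (Real.log y - Real.log x) ≤ y ^ 2 - x ^ 2 := by
  have hy : 0 < y := lt_of_lt_of_le hx hxy
  have hr : 1 ≤ y / x := (one_le_div hx).mpr hxy
  have := log_upper hr
  rw [Real.log_div hy.ne' hx.ne'] at this
  have h2 : y / x - (y / x)⁻¹ = (y^2 - x^2) / (x * y) := by
    rw [inv_div]; field_simp
  rw [h2] at this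
  have h3 := mul_le_mul_of_nonneg_left this (le_of_lt (mul_pos hx hy))
  calc 2 * x * y * (Real.log y - Real.log x)
      = x * y * (2 * (Real.log y - Real.log x)) := by ring
    _ ≤ x * y * ((y^2 - x^2) / (x * y)) := h3
    _ = y ^ 2 - x ^ 2 := by field_simp
lemma log_lower' {x y : ℝ} (hx : 0 < x) (hxy : x ≤ y) :
    2 * (y - x) ≤ (x + y) * (Real.log y - Real.log x) := by
  have hy : 0 < y := lt_of_lt_of_le hx hxy
  have hr : 1 ≤ y / x := (one_le_div hx).mpr hxy
  have := log_lower hr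
  rw [Real.log_div hy.ne' hx.ne'] at this
  have h3 := mul_le_mul_of_nonneg_left this hx.le
  calc 2 * (y - x) = x * (2 * (y / x - 1)) := by field_simp
    _ ≤ x * ((y / x + 1) * (Real.log y - Real.log x)) := h3
    _ = (x + y) * (Real.log y - Real.log x) := by
        have : x * (y / x + 1) = x + y := by field_simp; ring
        rw [← mul_assoc, this]

local notation "c" => (Real.exp 1)⁻¹

lemma c_pos : 0 < (Real.exp 1)⁻¹ := inv_pos.mpr (Real.exp_pos 1)

lemma log_c : Real.log c = -1 := by
  rw [Real.log_inv, Real.log_exp]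

lemma c_le_one : (Real.exp 1)⁻¹ ≤ 1 := by
  exact inv_le_one_of_one_le₀ (Real.one_le_exp zero_le_one)

lemma log_le_neg_one {a : ℝ} (ha : 0 < a) (hac : a ≤ c) : Real.log a ≤ -1 := by
  calc Real.log a ≤ Real.log c := Real.log_le_log ha hac
    _ = -1 := log_c

lemma mul_neg_log_le {a : ℝ} (ha : 0 ≤ a) : a * (-Real.log a) ≤ c := by
  rcases eq_or_lt_of_le ha with rfl | ha'
  · simpa using c_pos.le
  · have h1 : Real.log a⁻¹ ≤ a⁻¹ * c := by
      have h2 := Real.log_le_sub_one_of_pos (show 0 < a⁻¹ * c by positivity)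
      have h3 : Real.log (a⁻¹ * c) = Real.log a⁻¹ + (-1) := by
        rw [Real.log_mul (by positivity) (by positivity), log_c]
      rw [h3] at h2; linarith
    have h4 : -Real.log a = Real.log a⁻¹ := (Real.log_inv a).symm
    calc a * (-Real.log a) = a * Real.log a⁻¹ := by rw [h4]
      _ ≤ a * (a⁻¹ * c) := by
          exact mul_le_mul_of_nonneg_left h1 ha'.le
      _ = c := by rw [← mul_assoc, mul_inv_cancel₀ ha'.ne', one_mul]

lemma H_zero : H 0 = 0 := by simp [H, Real.exp_nonneg]

lemma tangent_inner {a b : ℝ} (ha : 0 ≤ a) (hac : a ≤ c) (hb : 0 ≤ b) (hbc : b ≤ c) :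
    h a * (b - a) ≤ H b - H a := by
  have haa : |a| ≤ c := by rwa [abs_of_nonneg ha]
  have hba : |b| ≤ c := by rwa [abs_of_nonneg hb]
  simp only [h, H, if_pos haa, if_pos hba]
  rcases eq_or_lt_of_le ha with rfl | ha'
  · have hb2 : Real.log (b ^ 2) ≤ 0 := by
      apply Real.log_nonpos (by positivity)
      nlinarith [c_le_one, c_pos]
    simp only [neg_zero, zero_mul, ne_eq, OfNat.ofNat_ne_zero, not_false_eq_true,
      zero_pow, mul_zero, Real.log_zero, zero_sub, neg_mul, sub_zero, add_zero]
    nlinarith [sq_nonneg b]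
  · have hLa : Real.log a ≤ -1 := log_le_neg_one ha' hac
    have hlog2a : Real.log (a ^ 2) = 2 * Real.log a := by
      rw [Real.log_pow]; push_cast; ring
    rcases eq_or_lt_of_le hb with rfl | hb'
    · simp only [ne_eq, OfNat.ofNat_ne_zero, not_false_eq_true, zero_pow, Real.log_zero,
        mul_zero, zero_mul, zero_sub, neg_zero, add_zero, zero_add]
      rw [hlog2a]
      nlinarith [sq_nonneg a, mul_pos ha' ha']
    · have hLb : Real.log b ≤ -1 := log_le_neg_one hb' hbc
      have hlog2b : Real.log (b ^ 2) = 2 * Real.log b := by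
        rw [Real.log_pow]; push_cast; ring
      rw [hlog2a, hlog2b]
      rcases le_total a b with hab | hab
      · -- a ≤ b
        have hU : 2 * a * b * (Real.log b - Real.log a) ≤ b ^ 2 - a ^ 2 :=
          log_upper' ha' hab
        have h1 : 0 ≤ 2 * a * b * ((-Real.log b - 1) * (a - b) ^ 2) :=
          mul_nonneg (by positivity) (mul_nonneg (by linarith) (sq_nonneg _))
        have h2 : 0 ≤ a * (b - a) ^ 3 :=
          mul_nonneg ha'.le (pow_nonneg (by linarith) 3)
        have h3 : 0 ≤ (2 * a * b - a ^ 2) * ((b ^ 2 - a ^ 2) -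
            2 * a * b * (Real.log b - Real.log a)) :=
          mul_nonneg (by nlinarith) (by linarith)
        have hab2 : 0 < 2 * a * b := by positivity
        nlinarith [h1, h2, h3, hab2]
      · -- b ≤ a
        have hLo : 2 * (a - b) ≤ (b + a) * (Real.log a - Real.log b) :=
          log_lower' hb' hab
        have h1 : 0 ≤ (a + b) * ((-Real.log a - 1) * (a - b) ^ 2) :=
          mul_nonneg (by positivity) (mul_nonneg (by linarith) (sq_nonneg _))
        have h2 : 0 ≤ b ^ 2 * ((b + a) * (Real.log a - Real.log b) - 2 * (a - b)) :=
          mul_nonneg (sq_nonneg _) (by linarith)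
        have h3 : 0 ≤ (a - b) ^ 3 := pow_nonneg (by linarith) 3
        have hab2 : 0 < a + b := by positivity
        nlinarith [h1, h2, h3, hab2]

lemma h_inner {a : ℝ} (ha : 0 ≤ a) (hac : a ≤ c) : h a = -a * Real.log (a ^ 2) := by
  rw [h, if_pos (by rwa [abs_of_nonneg ha])]

lemma h_outer {a : ℝ} (hac : c < a) : h a = 2 / Real.exp 1 := by
  have h0 : 0 < a := lt_trans c_pos hac
  rw [h, if_neg (by rw [abs_of_nonneg h0.le]; linarith), if_pos hac]

lemma H_inner {a : ℝ} (ha : 0 ≤ a) (hac : a ≤ c) :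
    H a = -(1 / 2) * a ^ 2 * Real.log (a ^ 2) + (1 / 2) * a ^ 2 := by
  rw [H, if_pos (by rwa [abs_of_nonneg ha])]

lemma log_c_sq : Real.log ((Real.exp 1)⁻¹ ^ 2) = -2 := by
  rw [Real.log_pow, log_c]; norm_num

lemma H_outer' {a : ℝ} (hac : c < a) : H a = 2 * c * a - 1 / 2 * c ^ 2 := by
  have h0 : 0 < a := lt_trans c_pos hac
  rw [H, if_neg (by rw [abs_of_nonneg h0.le]; linarith), abs_of_nonneg h0.le]
  have hE : (0:ℝ) < Real.exp 1 := Real.exp_pos 1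
  field_simp

lemma H_c : H c = 3 / 2 * c ^ 2 := by
  rw [H_inner c_pos.le le_rfl, log_c_sq]; ring

lemma h_c : h c = 2 * c := by
  rw [h_inner c_pos.le le_rfl, log_c_sq]; ring

lemma h_le_2c {a : ℝ} (ha : 0 ≤ a) (hac : a ≤ c) : h a ≤ 2 * c := by
  rw [h_inner ha hac]
  rcases eq_or_lt_of_le ha with rfl | ha'
  · simpa using c_pos.le
  · have hlog2a : Real.log (a ^ 2) = 2 * Real.log a := by
      rw [Real.log_pow]; push_cast; ring
    rw [hlog2a]
    have := mul_neg_log_le ha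
    nlinarith [this]

lemma h_nonneg' {a : ℝ} (ha : 0 ≤ a) : 0 ≤ h a := by
  rcases le_or_gt a c with hac | hac
  · rw [h_inner ha hac]
    have h1 : Real.log (a ^ 2) ≤ 0 := by
      apply Real.log_nonpos (by positivity)
      nlinarith [c_le_one, c_pos]
    nlinarith
  · rw [h_outer hac]; positivity

lemma haa_le {a : ℝ} (ha : 0 ≤ a) : h a * a ≤ 2 * H a := by
  rcases le_or_gt a c with hac | hac
  · rw [h_inner ha hac, H_inner ha hac]
    nlinarith [sq_nonneg a]
  · rw [h_outer hac, H_outer' hac]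
    have hE : (0:ℝ) < Real.exp 1 := Real.exp_pos 1
    have h2 : 2 / Real.exp 1 = 2 * c := by rw [div_eq_mul_inv]
    rw [h2]
    nlinarith [c_pos, mul_pos c_pos c_pos, mul_nonneg (sub_nonneg.mpr hac.le) c_pos.le]

lemma core {a b : ℝ} (ha : 0 ≤ a) (hb : 0 ≤ b) : h a * b ≤ H a + H b := by
  rcases le_or_gt a c with hac | hac
  · rcases le_or_gt b c with hbc | hbc
    · have t := tangent_inner ha hac hb hbc
      have q := haa_le ha
      nlinarith [t, q]
    · have t := tangent_inner ha hac c_pos.le le_rfl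
      have q := haa_le ha
      have h2c := h_le_2c ha hac
      have hnn := h_nonneg' ha
      have p1 : h a * (b - c) ≤ 2 * c * (b - c) :=
        mul_le_mul_of_nonneg_right h2c (by linarith)
      rw [H_outer' hbc] at *
      rw [H_c] at *
      nlinarith [p1, t, q]
  · have hha := h_outer hac
    have h2 : 2 / Real.exp 1 = 2 * c := by rw [div_eq_mul_inv]
    rw [hha, h2, H_outer' hac]
    rcases le_or_gt b c with hbc | hbc
    · have t := tangent_inner c_pos.le le_rfl hb hbc
      rw [h_c, H_c] at t
      nlinarith [t, mul_pos c_pos c_pos, mul_nonneg (sub_nonneg.mpr hac.le) c_pos.le]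
    · rw [H_outer' hbc]
      nlinarith [mul_pos c_pos c_pos, mul_nonneg (sub_nonneg.mpr hac.le) c_pos.le]

lemma scale_inner {t l : ℝ} (ht : 0 ≤ t) (hl : 1 ≤ l) (hlt : l * t ≤ c) :
    H (l * t) ≤ l ^ 2 * H t := by
  rcases eq_or_lt_of_le ht with rfl | ht'
  · simp [H_zero]
  · have htlt : t ≤ l * t := le_mul_of_one_le_left ht'.le hl
    have htc : t ≤ c := le_trans htlt hlt
    have hl0 : (0:ℝ) < l := lt_of_lt_of_le one_pos hl
    rw [H_inner ht'.le htc, H_inner (by positivity) hlt]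
    have hlog : Real.log ((l * t) ^ 2) = Real.log (l ^ 2) + Real.log (t ^ 2) := by
      rw [mul_pow, Real.log_mul (by positivity) (by positivity)]
    rw [hlog]
    have hl2 : 0 ≤ Real.log (l ^ 2) := Real.log_nonneg (by nlinarith)
    nlinarith [mul_nonneg (mul_nonneg (sq_nonneg l) (sq_nonneg t)) hl2]

lemma scale_outer {v : ℝ} (hv : 1 ≤ v) : H (v * c) ≤ v ^ 2 * H c := by
  rcases eq_or_lt_of_le hv with rfl | hv'
  · simp
  · have hvc : c < v * c := by nlinarith [c_pos]
    rw [H_outer' hvc, H_c]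
    nlinarith [mul_nonneg (mul_nonneg (show (0:ℝ) ≤ 3 * v - 1 by linarith)
      (show (0:ℝ) ≤ v - 1 by linarith)) (sq_nonneg ((Real.exp 1)⁻¹))]

lemma scale_le {t l : ℝ} (ht : 0 ≤ t) (hl : 1 ≤ l) : H (l * t) ≤ l ^ 2 * H t := by
  rcases eq_or_lt_of_le ht with rfl | ht'
  · simp [H_zero]
  rcases le_or_gt (l * t) c with h1 | h1
  · exact scale_inner ht hl h1
  rcases le_or_gt t c with h2 | h2
  · have hl0 : (0:ℝ) < l := lt_of_lt_of_le one_pos hl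
    have hmu : 1 ≤ c / t := (one_le_div ht').mpr h2
    have hmut : (c / t) * t = c := div_mul_cancel₀ _ ht'.ne'
    have hnu : 1 ≤ l * t / c := (one_le_div c_pos).mpr h1.le
    have e1 : H ((c / t) * t) ≤ (c / t) ^ 2 * H t := scale_inner ht hmu (le_of_eq hmut)
    have e2 : H ((l * t / c) * c) ≤ (l * t / c) ^ 2 * H c := scale_outer hnu
    have e3 : (l * t / c) * c = l * t := div_mul_cancel₀ _ c_pos.ne'
    rw [e3] at e2
    rw [hmut] at e1
    calc H (l * t) ≤ (l * t / c) ^ 2 * H c := e2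
      _ ≤ (l * t / c) ^ 2 * ((c / t) ^ 2 * H t) := mul_le_mul_of_nonneg_left e1 (sq_nonneg _)
      _ = l ^ 2 * H t := by
          rw [← mul_assoc]
          congr 1
          rw [div_pow, div_pow, div_mul_div_comm]
          rw [div_eq_iff (by positivity)]
          ring
  · have hlt : c < l * t := lt_of_lt_of_le h2 (le_mul_of_one_le_left ht'.le hl)
    rw [H_outer' hlt, H_outer' h2]
    have h4 : 0 ≤ 2 * c * l * (l - 1) * (t - c) :=
      mul_nonneg (mul_nonneg (mul_nonneg (by positivity) (by linarith)) (by linarith))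
        (by linarith)
    have h5 : 0 ≤ c ^ 2 * (l - 1) * (3 * l - 1) :=
      mul_nonneg (mul_nonneg (sq_nonneg _) (by linarith)) (by linarith)
    nlinarith [h4, h5]

lemma H_abs (u : ℝ) : H |u| = H u := by
  simp [H, abs_abs, sq_abs]

lemma h_neg (u : ℝ) : h (-u) = -h u := by
  by_cases h1 : |u| ≤ c
  · rw [h, h, if_pos (by rwa [abs_neg]), if_pos h1, neg_sq]
    ring
  · have hu : c < |u| := not_le.1 h1
    rcases le_or_gt u 0 with hu0 | hu0
    · have h3 : c < -u := by rwa [abs_of_nonpos hu0] at hu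
      have h2 : ¬ u > c := by push_neg; nlinarith [c_pos]
      rw [h, h, if_neg (by rwa [abs_neg]), if_neg h1, if_pos h3, if_neg h2]
      ring
    · have h3 : c < u := by rwa [abs_of_pos hu0] at hu
      have h2 : ¬ (-u > c) := by push_neg; nlinarith [c_pos]
      rw [h, h, if_neg (by rwa [abs_neg]), if_neg h1, if_neg h2, if_pos h3]

lemma h_abs (s : ℝ) : |h s| = h |s| := by
  rcases le_or_gt 0 s with hs | hs
  · rw [abs_of_nonneg hs, abs_of_nonneg (h_nonneg' hs)]
  · have h1 : h (-s) = -h s := h_neg s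
    have h2 : 0 ≤ h (-s) := h_nonneg' (by linarith)
    rw [abs_of_neg hs, h1, abs_of_nonpos (by linarith : h s ≤ 0)]

theorem young_type_inequality :
    ∀ s t : ℝ, ∀ θ ∈ Set.Ioc (0 : ℝ) 1, |h s * t| ≤ θ * H s + (1 / θ) * H t := by
  intro s t θ hθ
  obtain ⟨hθ0, hθ1⟩ := hθ
  have hθne : θ ≠ 0 := hθ0.ne'
  have hinv : 1 ≤ θ⁻¹ := by
    rw [le_inv_comm₀ one_pos hθ0]
    simpa using hθ1
  have habs : |h s * t| = h |s| * |t| := by rw [abs_mul, h_abs]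
  have hco : h |s| * (θ⁻¹ * |t|) ≤ H |s| + H (θ⁻¹ * |t|) :=
    core (abs_nonneg s) (by positivity)
  have hsc : H (θ⁻¹ * |t|) ≤ (θ⁻¹) ^ 2 * H |t| := scale_le (abs_nonneg t) hinv
  have key : h |s| * |t| = θ * (h |s| * (θ⁻¹ * |t|)) := by
    field_simp
  have step1 : θ * (h |s| * (θ⁻¹ * |t|)) ≤ θ * (H |s| + H (θ⁻¹ * |t|)) :=
    mul_le_mul_of_nonneg_left hco hθ0.le
  have step2 : θ * H (θ⁻¹ * |t|) ≤ θ * ((θ⁻¹) ^ 2 * H |t|) :=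
    mul_le_mul_of_nonneg_left hsc hθ0.le
  have e2 : θ * ((θ⁻¹) ^ 2 * H |t|) = (1 / θ) * H |t| := by
    field_simp
  have eHs : H |s| = H s := H_abs s
  have eHt : H |t| = H t := H_abs t
  rw [eHs] at step1
  rw [eHt] at step2 e2
  rw [habs, key]
  nlinarith [step1, step2, e2]
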